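/- Let X₁, …, Xₙ, Y be real Banach spaces and let T : X₁ × ⋯ × Xₙ → Y be a continuous n-linear operator that is compact, i.e., T maps B₁ × ⋯ × Bₙ to a relatively compact subset of Y whenever each Bᵢ is a bounded subset of Xᵢ. Then T is Dunford–Pettis: for every sequence (u^k)_k in X₁ × ⋯ × Xₙ such that the scalar sequence (φ(u^k))_k converges for every continuous n-linear form φ on X₁ × ⋯ × Xₙ, the sequence (T(u^k))_k converges in the norm of Y. -/

import Mathlib

open scoped BigOperators Topology
open Filter

/-- A continuous multilinear operator is compact if it maps products of bounded sets to
relatively compact sets. -/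
def IsCompactMultilinear {n : ℕ} {X : Fin n → Type*} [∀ i, NormedAddCommGroup (X i)]
    [∀ i, NormedSpace ℝ (X i)] {Y : Type*} [NormedAddCommGroup Y] [NormedSpace ℝ Y]
    (T : ContinuousMultilinearMap ℝ X Y) : Prop :=
  ∀ B : (i : Fin n) → Set (X i), (∀ i, Bornology.IsBounded (B i)) →
    IsCompact (closure (⇑T '' {x : (i : Fin n) → X i | ∀ i, x i ∈ B i}))

/-- A continuous multilinear operator is Dunford–Pettis if it sends every sequence that
is weakly Cauchy in the Segre cone (i.e. `(φ(uᵏ))ₖ` converges for every continuous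
multilinear form `φ`) to a norm-convergent sequence. -/
def IsDunfordPettisMultilinear {n : ℕ} {X : Fin n → Type*} [∀ i, NormedAddCommGroup (X i)]
    [∀ i, NormedSpace ℝ (X i)] {Y : Type*} [NormedAddCommGroup Y] [NormedSpace ℝ Y]
    (T : ContinuousMultilinearMap ℝ X Y) : Prop :=
  ∀ u : ℕ → ((i : Fin n) → X i),
    (∀ φ : ContinuousMultilinearMap ℝ X ℝ, ∃ L : ℝ, Tendsto (fun k => φ (u k)) atTop (𝓝 L)) →
    ∃ y : Y, Tendsto (fun k => T (u k)) atTop (𝓝 y)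

/-- Every compact continuous multilinear operator is Dunford–Pettis. -/
theorem isDunfordPettis_of_isCompact {n : ℕ} {X : Fin n → Type*}
    [∀ i, NormedAddCommGroup (X i)] [∀ i, NormedSpace ℝ (X i)] [∀ i, CompleteSpace (X i)]
    {Y : Type*} [NormedAddCommGroup Y] [NormedSpace ℝ Y] [CompleteSpace Y]
    (T : ContinuousMultilinearMap ℝ X Y) (hT : IsCompactMultilinear T) :
    IsDunfordPettisMultilinear T := by
  classical
  intro u hu
  -- Step A: uniform bound on the evaluation functionals via Banach–Steinhaus
  obtain ⟨C, hC⟩ : ∃ C, ∀ k, ‖ContinuousMultilinearMap.apply ℝ X ℝ (u k)‖ ≤ C := by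
    apply banach_steinhaus (g := fun k => ContinuousMultilinearMap.apply ℝ X ℝ (u k))
    intro φ
    obtain ⟨L, hL⟩ := hu φ
    obtain ⟨M, hM⟩ := hL.norm.bddAbove_range
    exact ⟨M, fun k => hM ⟨k, rfl⟩⟩
  have hC0 : 0 ≤ C := le_trans (norm_nonneg (ContinuousMultilinearMap.apply ℝ X ℝ (u 0))) (hC 0)
  -- Step A': the product of norms is bounded by C
  have hP : ∀ k, (∏ i, ‖u k i‖) ≤ C := by
    intro k
    have hf : ∀ i, ∃ f : X i →L[ℝ] ℝ, ‖f‖ ≤ 1 ∧ f (u k i) = ‖u k i‖ := by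
      intro i
      by_cases h : u k i = 0
      · exact ⟨0, by simp, by simp [h]⟩
      · obtain ⟨f, hf1, hf2⟩ := exists_dual_vector ℝ (u k i) (norm_ne_zero_iff.2 h)
        exact ⟨f, le_of_eq hf1, hf2⟩
    choose f hf1 hf2 using hf
    set φ : ContinuousMultilinearMap ℝ X ℝ :=
      (ContinuousMultilinearMap.mkPiAlgebra ℝ (Fin n) ℝ).compContinuousLinearMap f with hφ
    have hφval : φ (u k) = ∏ i, ‖u k i‖ := by
      simp [hφ, ContinuousMultilinearMap.compContinuousLinearMap_apply,
        ContinuousMultilinearMap.mkPiAlgebra_apply, hf2]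
    have hφnorm : ‖φ‖ ≤ 1 := by
      refine le_trans
        (ContinuousMultilinearMap.norm_compContinuousLinearMap_le _ f) ?_
      have : (∏ i, ‖f i‖) ≤ 1 := Finset.prod_le_one (fun i _ => norm_nonneg _) (fun i _ => hf1 i)
      calc ‖ContinuousMultilinearMap.mkPiAlgebra ℝ (Fin n) ℝ‖ * ∏ i, ‖f i‖
          ≤ 1 * 1 := by
            apply mul_le_mul _ this (Finset.prod_nonneg fun i _ => norm_nonneg _) zero_le_one
            rw [ContinuousMultilinearMap.norm_mkPiAlgebra]
        _ = 1 := one_mul 1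
    calc (∏ i, ‖u k i‖) = φ (u k) := hφval.symm
      _ ≤ ‖φ (u k)‖ := le_abs_self _
      _ = ‖ContinuousMultilinearMap.apply ℝ X ℝ (u k) φ‖ := rfl
      _ ≤ ‖ContinuousMultilinearMap.apply ℝ X ℝ (u k)‖ * ‖φ‖ :=
          ContinuousLinearMap.le_opNorm _ _
      _ ≤ C * 1 := mul_le_mul (hC k) hφnorm (norm_nonneg _) hC0
      _ = C := mul_one C
  -- Step B: normalize the sequence into a bounded product of balls
  set C' : ℝ := max C 1 with hC'
  have hC'1 : (1 : ℝ) ≤ C' := le_max_right _ _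
  have hC'0 : (0 : ℝ) < C' := lt_of_lt_of_le one_pos hC'1
  set R : ℝ := C' ^ ((n : ℝ)⁻¹) with hR
  have hR0 : 0 ≤ R := Real.rpow_nonneg hC'0.le _
  set v : ℕ → ((i : Fin n) → X i) := fun k i =>
    if ∀ j, u k j ≠ 0 then (((∏ j, ‖u k j‖) ^ ((n : ℝ)⁻¹)) / ‖u k i‖) • u k i else 0
    with hv
  have hTv : ∀ k, T (v k) = T (u k) := by
    intro k
    by_cases h : ∀ j, u k j ≠ 0
    · have hvk : v k = fun i => (((∏ j, ‖u k j‖) ^ ((n : ℝ)⁻¹)) / ‖u k i‖) • u k i :=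
        funext fun i => if_pos h
      rw [hvk, T.map_smul_univ]
      have hPpos : 0 < ∏ j, ‖u k j‖ :=
        Finset.prod_pos fun j _ => norm_pos_iff.2 (h j)
      rcases Nat.eq_zero_or_pos n with hn | hn
      · subst hn
        simp
      · have hprod : (∏ i, (((∏ j, ‖u k j‖) ^ ((n : ℝ)⁻¹)) / ‖u k i‖)) = 1 := by
          rw [Finset.prod_div_distrib, Finset.prod_const, Finset.card_univ, Fintype.card_fin,
            ← Real.rpow_natCast ((∏ j, ‖u k j‖) ^ ((n : ℝ)⁻¹)) n,
            ← Real.rpow_mul hPpos.le, inv_mul_cancel₀ (by exact_mod_cast hn.ne'),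
            Real.rpow_one, div_self hPpos.ne']
        rw [hprod, one_smul]
    · push_neg at h
      obtain ⟨j, hj⟩ := h
      have h1 : T (u k) = 0 := T.map_coord_zero j hj
      have h2 : v k j = 0 := by
        rw [hv]
        simp only
        rw [if_neg (by push_neg; exact ⟨j, hj⟩)]
      have h3 : T (v k) = 0 := T.map_coord_zero j h2
      rw [h1, h3]
  have hvball : ∀ k i, v k i ∈ Metric.closedBall (0 : X i) R := by
    intro k i
    rw [Metric.mem_closedBall, dist_zero_right]
    by_cases h : ∀ j, u k j ≠ 0
    · have hvki : v k i = (((∏ j, ‖u k j‖) ^ ((n : ℝ)⁻¹)) / ‖u k i‖) • u k i := if_pos h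
      have hPpos : 0 < ∏ j, ‖u k j‖ :=
        Finset.prod_pos fun j _ => norm_pos_iff.2 (h j)
      have hui : 0 < ‖u k i‖ := norm_pos_iff.2 (h i)
      rw [hvki, norm_smul, Real.norm_eq_abs,
        abs_of_nonneg (div_nonneg (Real.rpow_nonneg hPpos.le _) hui.le),
        div_mul_cancel₀ _ hui.ne']
      calc (∏ j, ‖u k j‖) ^ ((n : ℝ)⁻¹) ≤ C' ^ ((n : ℝ)⁻¹) :=
            Real.rpow_le_rpow hPpos.le ((hP k).trans (le_max_left _ _))
              (inv_nonneg.2 (Nat.cast_nonneg n))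
        _ = R := rfl
    · have : v k i = 0 := if_neg h
      rw [this, norm_zero]; exact hR0
  -- Step C: the images lie in a compact set
  set K : Set Y :=
    closure (⇑T '' {x : (i : Fin n) → X i | ∀ i, x i ∈ Metric.closedBall (0 : X i) R}) with hKdef
  have hKcpt : IsCompact K := hT _ fun i => Metric.isBounded_closedBall
  have hmem : ∀ k, T (u k) ∈ K := by
    intro k
    rw [← hTv k]
    exact subset_closure ⟨v k, fun i => hvball k i, rfl⟩
  -- Step D: weak convergence of T (u k) to any norm cluster point
  obtain ⟨a, haK, ψ, hψ, hconv⟩ := hKcpt.tendsto_subseq hmem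
  have hweak : ∀ g : Y →L[ℝ] ℝ, Tendsto (fun k => g (T (u k))) atTop (𝓝 (g a)) := by
    intro g
    obtain ⟨L, hL⟩ := hu (g.compContinuousMultilinearMap T)
    have hL' : Tendsto (fun k => g (T (u k))) atTop (𝓝 L) := hL
    have h1 : Tendsto (fun k => g (T (u (ψ k)))) atTop (𝓝 L) :=
      hL'.comp hψ.tendsto_atTop
    have h2 : Tendsto (fun k => g (T (u (ψ k)))) atTop (𝓝 (g a)) :=
      (g.continuous.tendsto a).comp hconv
    rwa [tendsto_nhds_unique h1 h2] at hL'
  -- Step E: norm convergence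
  refine ⟨a, ?_⟩
  by_contra hcon
  rw [Metric.tendsto_atTop] at hcon
  push_neg at hcon
  obtain ⟨ε, hε, hfreq⟩ := hcon
  have hfr : ∃ᶠ k in atTop, ε ≤ dist (T (u k)) a := by
    rw [frequently_atTop]
    intro N
    obtain ⟨k, hkN, hk⟩ := hfreq N
    exact ⟨k, hkN, hk⟩
  obtain ⟨θ, hθ, hθd⟩ := extraction_of_frequently_atTop hfr
  obtain ⟨b, hbK, ρ, hρ, hbconv⟩ := hKcpt.tendsto_subseq (fun k => hmem (θ k))
  have hba : b = a := by
    rw [NormedSpace.eq_iff_forall_dual_eq (𝕜 := ℝ)]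
    intro g
    have h1 : Tendsto (fun k => g (T (u (θ (ρ k))))) atTop (𝓝 (g b)) :=
      (g.continuous.tendsto b).comp hbconv
    have h2 : Tendsto (fun k => g (T (u (θ (ρ k))))) atTop (𝓝 (g a)) :=
      (hweak g).comp ((hθ.comp hρ).tendsto_atTop)
    exact tendsto_nhds_unique h1 h2
  have hdist : Tendsto (fun k => dist (T (u (θ (ρ k)))) a) atTop (𝓝 (dist b a)) :=
    (Continuous.tendsto (continuous_id.dist continuous_const) b).comp hbconv
  have hge : ε ≤ dist b a :=
    ge_of_tendsto hdist (Eventually.of_forall fun k => hθd (ρ k))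
  rw [hba, dist_self] at hge
  exact absurd hge (not_le.2 hε)
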